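/- Let Λ be an artin algebra whose Jacobson radical J satisfies Jⁿ = 0 for some n ≥ 2, and let M be a finitely generated Gorenstein projective Λ-module having no nonzero projective direct summands. Then J^{n-1} M = 0 and J^{n-2} M is a semisimple Λ-module. -/

import Mathlib

universe u

/-! Basic notions from the representation theory of artin algebras.

An artin algebra is an algebra `Λ` over a commutative artinian ring `R` which is finitely
generated as an `R`-module.  All modules considered are (finitely generated) left
`Λ`-modules. -/

/-- A (cochain) complex of projective `Λ`-modules which is totally acyclic: it is acyclic, and
applying `Hom_Λ(-, Q)` to it yields an acyclic complex for every projective `Λ`-module `Q`. -/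
structure TotallyAcyclicComplex (Λ : Type u) [Ring Λ] where
  X : ℤ → Type u
  [acg : ∀ i, AddCommGroup (X i)]
  [mods : ∀ i, Module Λ (X i)]
  proj : ∀ i, Module.Projective Λ (X i)
  d : ∀ i, X i →ₗ[Λ] X (i + 1)
  dd : ∀ i, (d (i + 1)).comp (d i) = 0
  acyclic : ∀ i, LinearMap.range (d i) = LinearMap.ker (d (i + 1))
  totally : ∀ (Q : Type u) [AddCommGroup Q] [Module Λ Q], Module.Projective Λ Q →
    ∀ (i : ℤ) (g : X (i + 1) →ₗ[Λ] Q), g.comp (d i) = 0 →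
      ∃ h : X (i + 1 + 1) →ₗ[Λ] Q, h.comp (d (i + 1)) = g

attribute [instance] TotallyAcyclicComplex.acg TotallyAcyclicComplex.mods

/-- `M` is Gorenstein projective if it is isomorphic to the zeroth cocycle `Z⁰ = ker (d 0)` of a
totally acyclic complex of projective `Λ`-modules. -/
def IsGorensteinProjective (Λ : Type u) [Ring Λ] (M : Type u) [AddCommGroup M]
    [Module Λ M] : Prop :=
  ∃ C : TotallyAcyclicComplex Λ, Nonempty (M ≃ₗ[Λ] LinearMap.ker (C.d 0))

/-- A submodule `N ≤ P` is superfluous if `K ⊔ N = ⊤` forces `K = ⊤`. -/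
def IsSuperfluous {Λ : Type u} [Ring Λ] {P : Type u} [AddCommGroup P] [Module Λ P]
    (N : Submodule Λ P) : Prop :=
  ∀ K : Submodule Λ P, K ⊔ N = ⊤ → K = ⊤

/-- `p : P → M` is a projective cover: `P` is projective, `p` is surjective and `ker p` is
superfluous in `P`. -/
def IsProjectiveCover {Λ : Type u} [Ring Λ] {P M : Type u} [AddCommGroup P] [Module Λ P]
    [AddCommGroup M] [Module Λ M] (p : P →ₗ[Λ] M) : Prop :=
  Module.Projective Λ P ∧ Function.Surjective p ∧ IsSuperfluous (LinearMap.ker p)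

/-- An indecomposable module: nonzero, and admitting no nontrivial direct sum decomposition. -/
def IsIndecomposable (Λ : Type u) [Ring Λ] (M : Type u) [AddCommGroup M] [Module Λ M] : Prop :=
  Nontrivial M ∧ ∀ N N' : Submodule Λ M, IsCompl N N' → N = ⊥ ∨ N = ⊤

/-- A splittable monomorphism (section). -/
def IsSplitMono {Λ : Type u} [Ring Λ] {A B : Type u} [AddCommGroup A] [Module Λ A]
    [AddCommGroup B] [Module Λ B] (f : A →ₗ[Λ] B) : Prop :=
  ∃ r : B →ₗ[Λ] A, r.comp f = LinearMap.id

/-- A splittable epimorphism (retraction). -/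
def IsSplitEpi {Λ : Type u} [Ring Λ] {A B : Type u} [AddCommGroup A] [Module Λ A]
    [AddCommGroup B] [Module Λ B] (f : A →ₗ[Λ] B) : Prop :=
  ∃ s : B →ₗ[Λ] A, f.comp s = LinearMap.id

/-- An irreducible morphism in the category of finitely generated `Λ`-modules:
it is neither a splittable proper epimorphism nor a splittable proper monomorphism, and in any
factorization `f = h ∘ g` either `h` is a splittable epimorphism or `g` is a splittable
monomorphism. -/
def IsIrreducibleHom (Λ : Type u) [Ring Λ] {B C : Type u} [AddCommGroup B] [Module Λ B]
    [AddCommGroup C] [Module Λ C] (f : B →ₗ[Λ] C) : Prop :=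
  ¬ (IsSplitEpi f ∧ ¬ Function.Bijective f) ∧
  ¬ (IsSplitMono f ∧ ¬ Function.Bijective f) ∧
  ∀ (Z : Type u) [AddCommGroup Z] [Module Λ Z] [Module.Finite Λ Z]
    (g : B →ₗ[Λ] Z) (h : Z →ₗ[Λ] C), h.comp g = f → IsSplitEpi h ∨ IsSplitMono g

/-- A left almost split morphism in the category of finitely generated `Λ`-modules. -/
def IsLeftAlmostSplit (Λ : Type u) [Ring Λ] {A B : Type u} [AddCommGroup A] [Module Λ A]
    [AddCommGroup B] [Module Λ B] (f : A →ₗ[Λ] B) : Prop :=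
  ¬ IsSplitMono f ∧
  ∀ (X : Type u) [AddCommGroup X] [Module Λ X] [Module.Finite Λ X] (u : A →ₗ[Λ] X),
    ¬ IsSplitMono u → ∃ v : B →ₗ[Λ] X, v.comp f = u

/-- A right almost split morphism in the category of finitely generated `Λ`-modules. -/
def IsRightAlmostSplit (Λ : Type u) [Ring Λ] {B C : Type u} [AddCommGroup B] [Module Λ B]
    [AddCommGroup C] [Module Λ C] (g : B →ₗ[Λ] C) : Prop :=
  ¬ IsSplitEpi g ∧
  ∀ (Y : Type u) [AddCommGroup Y] [Module Λ Y] [Module.Finite Λ Y] (u : Y →ₗ[Λ] C),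
    ¬ IsSplitEpi u → ∃ v : Y →ₗ[Λ] B, g.comp v = u

/-- `0 → A →f B →g C → 0` is an almost split (Auslander–Reiten) sequence: it is a
short exact sequence, `f` is left almost split and `g` is right almost split. -/
def IsAlmostSplitSequence (Λ : Type u) [Ring Λ] {A B C : Type u} [AddCommGroup A] [Module Λ A]
    [AddCommGroup B] [Module Λ B] [AddCommGroup C] [Module Λ C]
    (f : A →ₗ[Λ] B) (g : B →ₗ[Λ] C) : Prop :=
  Function.Injective f ∧ Function.Surjective g ∧ LinearMap.range f = LinearMap.ker g ∧
  IsLeftAlmostSplit Λ f ∧ IsRightAlmostSplit Λ g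

/-- The product `I • N` of an ideal with a submodule: the span of products `a • m` with `a ∈ I`,
`m ∈ N`.  (Stated so as to make sense over a noncommutative ring.) -/
def idealSmul {Λ : Type u} [Ring Λ] (I : Ideal Λ) {M : Type u} [AddCommGroup M] [Module Λ M]
    (N : Submodule Λ M) : Submodule Λ M :=
  Submodule.span Λ {x | ∃ a ∈ I, ∃ m ∈ N, x = a • m}

/-- `radPow Λ M k` is the submodule `Jᵏ M` of `M`, where `J` is the Jacobson radical of `Λ`.
In particular `radPow Λ Λ k` is the ideal `Jᵏ`. -/
def radPow (Λ : Type u) [Ring Λ] (M : Type u) [AddCommGroup M] [Module Λ M] :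
    ℕ → Submodule Λ M
  | 0 => ⊤
  | k + 1 => idealSmul ((⊥ : Ideal Λ).jacobson) (radPow Λ M k)

section Aux

variable {Λ : Type u} [Ring Λ]

lemma jac_mul_mem {x y : Λ} (hx : x ∈ (⊥ : Ideal Λ).jacobson) :
    x * y ∈ (⊥ : Ideal Λ).jacobson :=
  by rw [Ideal.jacobson_bot] at hx ⊢; exact Ideal.mul_mem_right y _ hx

lemma pow_mem_radPow {a : Λ} (ha : a ∈ (⊥ : Ideal Λ).jacobson) (k : ℕ) :
    a ^ k ∈ radPow Λ Λ k := by
  induction k with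
  | zero => exact Submodule.mem_top
  | succ k ih =>
    rw [pow_succ']
    exact Submodule.subset_span ⟨a, ha, a ^ k, ih, (smul_eq_mul _ _).symm⟩

variable {M : Type u} [AddCommGroup M] [Module Λ M]

lemma smul_mem_idealSmul {I : Ideal Λ} {N : Submodule Λ M} {a : Λ} (ha : a ∈ I)
    {m : M} (hm : m ∈ N) : a • m ∈ idealSmul I N :=
  Submodule.subset_span ⟨a, ha, m, hm, rfl⟩

lemma idealSmul_le {I : Ideal Λ} {N T : Submodule Λ M}
    (h : ∀ a ∈ I, ∀ m ∈ N, a • m ∈ T) : idealSmul I N ≤ T :=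
  Submodule.span_le.2 (by rintro x ⟨a, ha, m, hm, rfl⟩; exact h a ha m hm)

lemma idealSmul_mono {I : Ideal Λ} {N N' : Submodule Λ M} (h : N ≤ N') :
    idealSmul I N ≤ idealSmul I N' :=
  idealSmul_le fun a ha m hm => smul_mem_idealSmul ha (h hm)

lemma idealSmul_le_self {I : Ideal Λ} {N : Submodule Λ M} : idealSmul I N ≤ N :=
  idealSmul_le fun a _ m hm => N.smul_mem a hm

lemma idealSmul_sup_le {I : Ideal Λ} {N N' : Submodule Λ M} :
    idealSmul I (N ⊔ N') ≤ idealSmul I N ⊔ idealSmul I N' := by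
  refine idealSmul_le fun a ha m hm => ?_
  obtain ⟨x, hx, y, hy, rfl⟩ := Submodule.mem_sup.1 hm
  rw [smul_add]
  exact Submodule.add_mem _ (Submodule.mem_sup_left (smul_mem_idealSmul ha hx))
    (Submodule.mem_sup_right (smul_mem_idealSmul ha hy))

lemma idealSmul_induction {I : Ideal Λ} {N : Submodule Λ M} {p : M → Prop}
    (h0 : p 0) (hadd : ∀ x y, p x → p y → p (x + y))
    (hs : ∀ a ∈ I, ∀ m ∈ N, p (a • m)) :
    ∀ x ∈ idealSmul I N, p x := by
  set S : Set M := {x | ∃ a ∈ I, ∃ m ∈ N, x = a • m} with hS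
  have hsmul : ∀ (c : Λ), ∀ x ∈ AddSubmonoid.closure S, c • x ∈ AddSubmonoid.closure S := by
    intro c x hx
    refine AddSubmonoid.closure_induction (fun y hy => ?_) (by simpa using (AddSubmonoid.closure S).zero_mem)
      (fun x y _ _ hx hy => by rw [smul_add]; exact add_mem hx hy) hx
    obtain ⟨a, ha, m, hm, rfl⟩ := hy
    exact AddSubmonoid.subset_closure ⟨c * a, I.mul_mem_left c ha, m, hm, by rw [mul_smul]⟩
  let T : Submodule Λ M :=
    { carrier := AddSubmonoid.closure S
      add_mem' := fun h1 h2 => add_mem h1 h2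
      zero_mem' := zero_mem _
      smul_mem' := fun c x hx => hsmul c x hx }
  intro x hx
  have hx' : x ∈ AddSubmonoid.closure S :=
    (Submodule.span_le.2 (fun y hy => (AddSubmonoid.subset_closure hy : y ∈ T)) : idealSmul I N ≤ T) hx
  exact AddSubmonoid.closure_induction
    (fun y hy => by obtain ⟨a, ha, m, hm, rfl⟩ := hy; exact hs a ha m hm)
    h0 (fun x y _ _ => hadd x y) hx'

lemma map_idealSmul_le {M' : Type u} [AddCommGroup M'] [Module Λ M'] (f : M →ₗ[Λ] M')
    (I : Ideal Λ) (N : Submodule Λ M) :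
    (idealSmul I N).map f ≤ idealSmul I (N.map f) := by
  rw [idealSmul, Submodule.map_span]
  refine Submodule.span_le.2 ?_
  rintro _ ⟨x, ⟨a, ha, m, hm, rfl⟩, rfl⟩
  rw [map_smul]
  exact smul_mem_idealSmul ha ⟨m, hm, rfl⟩

lemma radPow_zero : radPow Λ M 0 = ⊤ := rfl

lemma radPow_succ (k : ℕ) :
    radPow Λ M (k + 1) = idealSmul ((⊥ : Ideal Λ).jacobson) (radPow Λ M k) := rfl

lemma map_radPow_le {M' : Type u} [AddCommGroup M'] [Module Λ M'] (f : M →ₗ[Λ] M') (k : ℕ) :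
    (radPow Λ M k).map f ≤ radPow Λ M' k := by
  induction k with
  | zero => exact le_top
  | succ k ih =>
    rw [radPow_succ, radPow_succ]
    exact (map_idealSmul_le f _ _).trans (idealSmul_mono ih)

lemma top_le_idealSmul_top : (⊤ : Submodule Λ M) ≤ idealSmul (⊤ : Ideal Λ) ⊤ := by
  intro x _
  simpa using smul_mem_idealSmul (I := (⊤ : Ideal Λ)) (a := (1 : Λ)) Submodule.mem_top
    (Submodule.mem_top (x := x))

lemma idealSmul_step {J₀ I : Ideal Λ} {T : Submodule Λ M} (hT : T ≤ idealSmul I ⊤) :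
    idealSmul J₀ T ≤ idealSmul (idealSmul J₀ I) ⊤ := by
  refine idealSmul_le fun a ha m hm => ?_
  refine idealSmul_induction (p := fun m => a • m ∈ idealSmul (idealSmul J₀ I) ⊤)
    (show a • (0:M) ∈ _ by rw [smul_zero]; exact zero_mem _)
    (fun x y hx hy => show a • (x + y) ∈ _ by rw [smul_add]; exact add_mem hx hy) ?_ m (hT hm)
  intro b hb x _
  rw [← mul_smul]
  have : a * b ∈ idealSmul J₀ I := by
    simpa [smul_eq_mul] using smul_mem_idealSmul (N := I) ha hb
  exact smul_mem_idealSmul this Submodule.mem_top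

lemma radPow_le_idealSmul_top (k : ℕ) :
    radPow Λ M k ≤ idealSmul (radPow Λ Λ k) ⊤ := by
  induction k with
  | zero => exact top_le_idealSmul_top
  | succ k ih =>
    rw [radPow_succ, radPow_succ]
    exact idealSmul_step ih

lemma idealSmul_bot_left {N : Submodule Λ M} : idealSmul (⊥ : Ideal Λ) N = ⊥ := by
  refine le_bot_iff.1 (idealSmul_le fun a ha m _ => ?_)
  rw [Ideal.mem_bot] at ha
  rw [ha, zero_smul]
  exact Submodule.zero_mem _

lemma radPow_eq_bot {n : ℕ} (hJn : radPow Λ Λ n = ⊥) : radPow Λ M n = ⊥ := by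
  have h := radPow_le_idealSmul_top (Λ := Λ) (M := M) n
  rw [hJn, idealSmul_bot_left] at h
  exact le_bot_iff.1 h

lemma radPow_eq_bot_of_equiv {M' : Type u} [AddCommGroup M'] [Module Λ M']
    (e : M ≃ₗ[Λ] M') {k : ℕ} (h : radPow Λ M' k = ⊥) : radPow Λ M k = ⊥ := by
  rw [eq_bot_iff]
  intro x hx
  have h2 : e x ∈ radPow Λ M' k :=
    map_radPow_le (e : M →ₗ[Λ] M') k (Submodule.mem_map_of_mem hx)
  rw [h, Submodule.mem_bot] at h2
  rw [Submodule.mem_bot]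
  exact e.map_eq_zero_iff.1 h2

end Aux
section Aux2

variable {Λ : Type u} [Ring Λ]

/-- Nakayama via nilpotency of the radical. -/
lemma le_of_le_sup_idealSmul {M : Type u} [AddCommGroup M] [Module Λ M]
    {n : ℕ} (hJn : radPow Λ Λ n = ⊥) {A K : Submodule Λ M}
    (h : A ≤ K ⊔ idealSmul ((⊥ : Ideal Λ).jacobson) A) : A ≤ K := by
  set J : Ideal Λ := (⊥ : Ideal Λ).jacobson with hJ
  let aux : ℕ → Submodule Λ M := fun t => Nat.rec A (fun _ N => idealSmul J N) t
  have haux_succ : ∀ t, aux (t + 1) = idealSmul J (aux t) := fun t => rfl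
  have haux_le : ∀ t, aux t ≤ idealSmul (radPow Λ Λ t) ⊤ := by
    intro t
    induction t with
    | zero => exact le_trans le_top top_le_idealSmul_top
    | succ t ih => rw [haux_succ, radPow_succ]; exact idealSmul_step ih
  have key : ∀ t, A ≤ K ⊔ aux t := by
    intro t
    induction t with
    | zero => exact le_sup_right
    | succ t ih =>
      refine h.trans (sup_le le_sup_left ?_)
      have : idealSmul J A ≤ idealSmul J (K ⊔ aux t) := idealSmul_mono ih
      refine this.trans (idealSmul_sup_le.trans (sup_le ?_ ?_))
      · exact le_sup_left.trans' idealSmul_le_self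
      · rw [← haux_succ]; exact le_sup_right
  have hbot : aux n ≤ ⊥ := by
    have := haux_le n
    rwa [hJn, idealSmul_bot_left] at this
  have := key n
  rwa [le_bot_iff.1 hbot, sup_bot_eq] at this

/-- congruence modulo the radical is multiplicative. -/
lemma jac_sub_mul {a b c d : Λ} (h1 : a - b ∈ (⊥ : Ideal Λ).jacobson)
    (h2 : c - d ∈ (⊥ : Ideal Λ).jacobson) : a * c - b * d ∈ (⊥ : Ideal Λ).jacobson := by
  have : a * c - b * d = (a - b) * c + b * (c - d) := by noncomm_ring
  rw [this]
  exact add_mem (jac_mul_mem h1) (Ideal.mul_mem_left _ b h2)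

lemma jac_sub_pow {a b : Λ} (h : a - b ∈ (⊥ : Ideal Λ).jacobson) (k : ℕ) :
    a ^ k - b ^ k ∈ (⊥ : Ideal Λ).jacobson := by
  induction k with
  | zero => simp
  | succ k ih =>
    rw [pow_succ', pow_succ']
    exact jac_sub_mul h ih

lemma jac_pow_sub_self {a : Λ} (h : a * a - a ∈ (⊥ : Ideal Λ).jacobson) (k : ℕ) :
    a ^ (k + 1) - a ∈ (⊥ : Ideal Λ).jacobson := by
  induction k with
  | zero => simp
  | succ k ih =>
    have : a ^ (k + 2) - a = a * (a ^ (k + 1) - a) + (a * a - a) := by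
      rw [mul_sub, ← pow_succ']; noncomm_ring
    rw [this]
    exact add_mem (Ideal.mul_mem_left _ a ih) h

/-- A module over a trivial situation is semisimple. -/
lemma isSemisimpleModule_of_subsingleton {M : Type u} [AddCommGroup M] [Module Λ M]
    [Subsingleton M] : IsSemisimpleModule Λ M := by
  have hall : ∀ b : Submodule Λ M, b = ⊥ := fun b =>
    eq_bot_iff.2 fun x _ => by
      rw [Submodule.mem_bot, Subsingleton.elim x 0]
  refine @IsSemisimpleModule.mk _ _ _ _ _ ⟨?_⟩
  intro a
  refine ⟨a, ?_, ?_⟩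
  · rw [hall a]; exact disjoint_bot_left
  · rw [codisjoint_iff, hall (a ⊔ a), hall ⊤]

lemma isSemisimpleModule_prod {A B : Type u} [AddCommGroup A] [Module Λ A]
    [AddCommGroup B] [Module Λ B] [IsSemisimpleModule Λ A] [IsSemisimpleModule Λ B] :
    IsSemisimpleModule Λ (A × B) := by
  refine isSemisimpleModule_of_isSemisimpleModule_submodule'
    (p := fun b : Bool => if b then LinearMap.range (LinearMap.inl Λ A B)
      else LinearMap.range (LinearMap.inr Λ A B)) ?_ ?_
  · rintro (_ | _)
    · rw [if_neg Bool.false_ne_true]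
      exact IsSemisimpleModule.congr (LinearEquiv.ofInjective _ LinearMap.inr_injective).symm
    · rw [if_pos rfl]
      exact IsSemisimpleModule.congr (LinearEquiv.ofInjective _ LinearMap.inl_injective).symm
  · rw [iSup_bool_eq, if_pos rfl, if_neg Bool.false_ne_true]
    exact LinearMap.sup_range_inl_inr

end Aux2
section Aux3

variable {Λ : Type u} [Ring Λ]

/-- Over an artinian ring, `Λ / J` is a semisimple module. -/
lemma isSemisimpleModule_quotient_jacobson [IsArtinianRing Λ] :
    IsSemisimpleModule Λ (Λ ⧸ ((⊥ : Ideal Λ).jacobson : Submodule Λ Λ)) := by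
  set S : Set (Submodule Λ Λ) :=
    {I | (⊥ : Ideal Λ).jacobson ≤ I ∧ IsSemisimpleModule Λ (Λ ⧸ I)} with hS
  have htop : (⊤ : Submodule Λ Λ) ∈ S := by
    refine ⟨le_top, ?_⟩
    have : Subsingleton (Λ ⧸ (⊤ : Submodule Λ Λ)) :=
      Submodule.Quotient.subsingleton_iff.2 rfl
    exact isSemisimpleModule_of_subsingleton
  obtain ⟨I₀, hI₀S, hmin⟩ := IsArtinian.set_has_minimal S ⟨⊤, htop⟩
  by_cases hle : I₀ ≤ (⊥ : Ideal Λ).jacobson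
  · have heq : I₀ = ((⊥ : Ideal Λ).jacobson : Submodule Λ Λ) := le_antisymm hle hI₀S.1
    exact heq ▸ hI₀S.2
  · exfalso
    have hle' : ¬ ∀ m : Ideal Λ, m.IsMaximal → I₀ ≤ m := fun h =>
      hle (le_sInf fun m hm => h m hm.2)
    push_neg at hle'
    obtain ⟨m, hmmax, hm⟩ := hle'
    set I' : Submodule Λ Λ := I₀ ⊓ (m : Submodule Λ Λ) with hI'
    have hlt : I' < I₀ := lt_of_le_of_ne inf_le_left (fun h => hm (h ▸ inf_le_right))
    haveI h1 : IsSemisimpleModule Λ (Λ ⧸ I₀) := hI₀S.2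
    haveI h2 : IsSimpleModule Λ (Λ ⧸ (m : Submodule Λ Λ)) :=
      isSimpleModule_iff_isCoatom.2 (Ideal.isMaximal_def.1 hmmax)
    let q : Λ →ₗ[Λ] (Λ ⧸ I₀) × (Λ ⧸ (m : Submodule Λ Λ)) :=
      (I₀.mkQ).prod ((m : Submodule Λ Λ).mkQ)
    have hker : LinearMap.ker q = I' := by
      rw [LinearMap.ker_prod, Submodule.ker_mkQ, Submodule.ker_mkQ]
    let qbar := I'.liftQ q hker.ge
    have hinj : Function.Injective qbar := by
      rw [← LinearMap.ker_eq_bot]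
      exact Submodule.ker_liftQ_eq_bot _ _ _ hker.le
    haveI hprod : IsSemisimpleModule Λ ((Λ ⧸ I₀) × (Λ ⧸ (m : Submodule Λ Λ))) :=
      isSemisimpleModule_prod
    haveI : IsSemisimpleModule Λ (Λ ⧸ I') :=
      IsSemisimpleModule.congr (LinearEquiv.ofInjective qbar hinj)
    refine hmin I' ⟨le_inf hI₀S.1 (sInf_le ⟨bot_le, hmmax⟩), this⟩ hlt

/-- A module annihilated by the Jacobson radical is semisimple (over an artinian ring). -/
lemma isSemisimpleModule_of_jacobson_smul_eq_zero {W : Type u} [AddCommGroup W] [Module Λ W]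
    (hss : IsSemisimpleModule Λ (Λ ⧸ ((⊥ : Ideal Λ).jacobson : Submodule Λ Λ)))
    (h : ∀ a ∈ (⊥ : Ideal Λ).jacobson, ∀ w : W, a • w = 0) : IsSemisimpleModule Λ W := by
  have hker : ∀ w : W, ((⊥ : Ideal Λ).jacobson : Submodule Λ Λ) ≤
      LinearMap.ker (LinearMap.toSpanSingleton Λ W w) := by
    intro w a ha
    rw [LinearMap.mem_ker]
    exact h a ha w
  let f : W → (Λ ⧸ ((⊥ : Ideal Λ).jacobson : Submodule Λ Λ)) →ₗ[Λ] W := fun w =>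
    Submodule.liftQ _ (LinearMap.toSpanSingleton Λ W w) (hker w)
  haveI := hss
  refine isSemisimpleModule_of_isSemisimpleModule_submodule'
    (p := fun w : W => LinearMap.range (f w)) (fun w => IsSemisimpleModule.range (f w)) ?_
  rw [eq_top_iff]
  intro x _
  refine Submodule.mem_iSup_of_mem x ⟨Submodule.Quotient.mk 1, ?_⟩
  show LinearMap.toSpanSingleton Λ W x 1 = x
  simp

end Aux3
section Key

variable {Λ : Type u} [Ring Λ]

lemma ker_le_idealSmul_of_no_proj_summand
    {P M : Type u} [AddCommGroup P] [Module Λ P] [Module.Projective Λ P]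
    [AddCommGroup M] [Module Λ M]
    {n : ℕ} (hn : 1 ≤ n) (hJn : radPow Λ Λ n = ⊥)
    (hss : IsSemisimpleModule Λ (Λ ⧸ ((⊥ : Ideal Λ).jacobson : Submodule Λ Λ)))
    (K : Submodule Λ P) (e : M ≃ₗ[Λ] K)
    (hsummand : ∀ N N' : Submodule Λ M, IsCompl N N' → Module.Projective Λ ↥N → N = ⊥) :
    K ≤ idealSmul ((⊥ : Ideal Λ).jacobson) ⊤ := by
  set J : Ideal Λ := (⊥ : Ideal Λ).jacobson with hJdef
  intro x hxK
  by_contra hx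
  obtain ⟨s, hs⟩ := Module.projective_def.mp (inferInstance : Module.Projective Λ P)
  have hcoord : ∃ p : P, (s x) p ∉ J := by
    by_contra hc; push_neg at hc
    apply hx
    have hx1 : x = Finsupp.linearCombination Λ id (s x) := (hs x).symm
    rw [hx1, Finsupp.linearCombination_apply, Finsupp.sum]
    exact Submodule.sum_mem _ (fun p _ => smul_mem_idealSmul (hc p) Submodule.mem_top)
  obtain ⟨p0, hp0⟩ := hcoord
  set lam : M →ₗ[Λ] Λ := (Finsupp.lapply p0) ∘ₗ s ∘ₗ K.subtype ∘ₗ (e : M →ₗ[Λ] K) with hlamdef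
  have hlamx : lam (e.symm ⟨x, hxK⟩) = (s x) p0 := by
    simp [hlamdef]
  set I : Submodule Λ Λ := LinearMap.range lam with hIdef
  have htI : (s x) p0 ∈ I := ⟨e.symm ⟨x, hxK⟩, hlamx⟩
  haveI := hss
  set mkq : Λ →ₗ[Λ] Λ ⧸ (J : Submodule Λ Λ) := (J : Submodule Λ Λ).mkQ with hmkq
  obtain ⟨Cc, hCc⟩ := exists_isCompl (Submodule.map mkq I)
  have h1 : mkq 1 ∈ (Submodule.map mkq I) ⊔ Cc := by rw [hCc.sup_eq_top]; trivial
  obtain ⟨y, hy, z, hz, hyz⟩ := Submodule.mem_sup.1 h1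
  obtain ⟨i, hiI, hyi⟩ := hy
  have hmk_zero : ∀ a : Λ, mkq a = 0 ↔ a ∈ J := by
    intro a
    rw [hmkq, Submodule.mkQ_apply, Submodule.Quotient.mk_eq_zero]
  have hInotbot : Submodule.map mkq I ≠ ⊥ := by
    intro hbot
    have hmem : mkq ((s x) p0) ∈ Submodule.map mkq I := Submodule.mem_map_of_mem htI
    rw [hbot, Submodule.mem_bot, hmk_zero] at hmem
    exact hp0 hmem
  have hiJ : i ∉ J := by
    intro hiJ'
    have hy0 : y = 0 := by rw [← hyi, hmk_zero]; exact hiJ'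
    have hz1 : mkq 1 = z := by rw [← hyz, hy0, zero_add]
    have hCtop : Cc = ⊤ := by
      rw [eq_top_iff]
      intro q _
      obtain ⟨c, rfl⟩ := Submodule.mkQ_surjective _ q
      have : mkq c = c • mkq 1 := by rw [← map_smul, smul_eq_mul, mul_one]
      rw [this, hz1]
      exact Cc.smul_mem c hz
    have := hCc.disjoint
    rw [hCtop, disjoint_top] at this
    exact hInotbot this
  -- i is idempotent modulo J
  have hz' : mkq (1 - i) ∈ Cc := by
    have : mkq (1 - i) = z := by rw [map_sub, hyi, ← hyz]; abel
    rw [this]; exact hz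
  have hIdem : i * i - i ∈ J := by
    have w1 : mkq (i - i * i) ∈ Cc := by
      have h1 : i - i * i = i • (1 - i) := by rw [smul_eq_mul]; noncomm_ring
      rw [h1, map_smul]
      exact Cc.smul_mem i hz'
    have w2 : mkq (i - i * i) ∈ Submodule.map mkq I := by
      have h2 : mkq (i - i * i) = y - i • y := by
        rw [map_sub, hyi]
        congr 1
        rw [← hyi, ← map_smul, smul_eq_mul]
      rw [h2]
      exact sub_mem (⟨i, hiI, hyi⟩) (Submodule.smul_mem _ i ⟨i, hiI, hyi⟩)
    have : mkq (i - i * i) = 0 :=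
      Submodule.disjoint_def.1 hCc.disjoint _ w2 w1
    rw [hmk_zero] at this
    simpa using neg_mem this
  -- lift to an actual idempotent
  have hn' : n - 1 + 1 = n := Nat.succ_pred_eq_of_pos hn
  have hd : (i - i ^ 2) ^ n = 0 := by
    have hmem : i - i ^ 2 ∈ J := by
      rw [pow_two]
      simpa using neg_mem hIdem
    have := pow_mem_radPow hmem n
    rwa [hJn, Submodule.mem_bot] at this
  set e0 : Λ := 1 - (1 - i ^ n) ^ n with he0def
  have he0 : IsIdempotentElem e0 := isIdempotentElem_one_sub_one_sub_pow_pow i n hd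
  have hin : i ^ n - i ∈ J := by
    have := jac_pow_sub_self hIdem (n - 1)
    rwa [hn'] at this
  have h1i : (1 - i) * (1 - i) - (1 - i) ∈ J := by
    have : (1 - i) * (1 - i) - (1 - i) = i * i - i := by noncomm_ring
    rw [this]; exact hIdem
  have h1in : (1 - i) ^ n - (1 - i) ∈ J := by
    have := jac_pow_sub_self h1i (n - 1)
    rwa [hn'] at this
  have h3 : (1 - i ^ n) ^ n - (1 - i) ^ n ∈ J := by
    refine jac_sub_pow ?_ n
    have : (1 - i ^ n) - (1 - i) = -(i ^ n - i) := by abel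
    rw [this]; exact neg_mem hin
  have he0i : e0 - i ∈ J := by
    have hdecomp : e0 - i = -((1 - i) ^ n - (1 - i)) + -((1 - i ^ n) ^ n - (1 - i) ^ n) := by
      rw [he0def]; abel
    rw [hdecomp]
    exact add_mem (neg_mem h1in) (neg_mem h3)
  have he0J : e0 ∉ J := fun h => hiJ (by simpa using sub_mem h he0i)
  -- the projective summand
  set ρ : Λ →ₗ[Λ] Λ := LinearMap.toSpanSingleton Λ Λ e0 with hρdef
  have hρ : ∀ c : Λ, ρ c = c * e0 := fun c => by
    rw [hρdef, LinearMap.toSpanSingleton_apply, smul_eq_mul]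
  set spanE : Submodule Λ Λ := Submodule.span Λ {e0} with hspanEdef
  have he0mem : e0 ∈ spanE := Submodule.mem_span_singleton_self e0
  have hmem_spanE : ∀ c : Λ, c * e0 ∈ spanE := fun c => by
    rw [← smul_eq_mul]; exact spanE.smul_mem c he0mem
  have hsup : spanE ≤ (Submodule.map ρ I) ⊔ idealSmul J spanE := by
    rw [hspanEdef, Submodule.span_le, Set.singleton_subset_iff, SetLike.mem_coe]
    have hsplit : e0 = i * e0 + (e0 - i) * e0 := by
      rw [← add_mul]
      have h4 : i + (e0 - i) = e0 := by abel
      rw [h4, he0.eq]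
    have hmem2 : i * e0 + (e0 - i) * e0 ∈ Submodule.map ρ I ⊔ idealSmul J spanE := by
      refine add_mem (Submodule.mem_sup_left ⟨i, hiI, hρ i⟩) (Submodule.mem_sup_right ?_)
      rw [← smul_eq_mul]
      exact smul_mem_idealSmul he0i he0mem
    rwa [← hsplit] at hmem2
  have hIe : spanE ≤ Submodule.map ρ I := le_of_le_sup_idealSmul hJn hsup
  set φ : M →ₗ[Λ] Λ := ρ ∘ₗ lam with hφdef
  have hφmem : ∀ mm : M, φ mm ∈ spanE := fun mm => by
    rw [hφdef, LinearMap.comp_apply, hρ]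
    exact hmem_spanE _
  set φ' : M →ₗ[Λ] ↥spanE := φ.codRestrict spanE hφmem with hφ'def
  have hφ'val : ∀ mm : M, (φ' mm : Λ) = φ mm := fun mm => rfl
  have hsurj : Function.Surjective φ' := by
    rintro ⟨v, hv⟩
    obtain ⟨a, haI, hav⟩ := hIe hv
    obtain ⟨mm, hmm⟩ := haI
    refine ⟨mm, Subtype.ext ?_⟩
    rw [hφ'val, hφdef, LinearMap.comp_apply, hmm, hav]
  have hfix : ∀ v ∈ spanE, v * e0 = v := by
    intro v hv
    obtain ⟨c, rfl⟩ := Submodule.mem_span_singleton.1 hv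
    rw [smul_mul_assoc, he0.eq]
  haveI hproj : Module.Projective Λ ↥spanE := by
    refine Module.Projective.of_split (M := Λ) spanE.subtype
      (ρ.codRestrict spanE (fun c => by rw [hρ]; exact hmem_spanE c)) ?_
    ext v
    exact congrArg Subtype.val (Subtype.ext ((hρ v.1).trans (hfix v.1 v.2)) :
      (ρ.codRestrict spanE _) (spanE.subtype v) = v)
  obtain ⟨h, hh⟩ := Module.projective_lifting_property φ' LinearMap.id hsurj
  have hlinv : ∀ v : ↥spanE, φ' (h v) = v := fun v => by
    rw [← LinearMap.comp_apply, hh]; rfl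
  have hinj : Function.Injective h := Function.LeftInverse.injective hlinv
  set N : Submodule Λ M := LinearMap.range h with hNdef
  have hNcompl : IsCompl N (LinearMap.ker φ') := by
    constructor
    · rw [Submodule.disjoint_def]
      rintro a ⟨v, rfl⟩ haK
      rw [LinearMap.mem_ker] at haK
      have : v = 0 := by rw [← hlinv v, haK]
      rw [this, map_zero]
    · rw [codisjoint_iff, eq_top_iff]
      intro mm _
      have hdec : mm = h (φ' mm) + (mm - h (φ' mm)) := by abel
      rw [hdec]
      refine Submodule.add_mem_sup (LinearMap.mem_range_self h _) ?_
      rw [LinearMap.mem_ker, map_sub, hlinv, sub_self]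
  have hNproj : Module.Projective Λ ↥N :=
    Module.Projective.of_equiv (LinearEquiv.ofInjective h hinj)
  have hN : N = ⊥ := hsummand N _ hNcompl hNproj
  have hmemN : h ⟨e0, he0mem⟩ ∈ N := LinearMap.mem_range_self _ _
  rw [hN, Submodule.mem_bot] at hmemN
  have he00 : (⟨e0, he0mem⟩ : ↥spanE) = 0 := by
    have h2 := hlinv ⟨e0, he0mem⟩
    rw [hmemN, map_zero] at h2
    exact h2.symm
  exact he0J (by rw [show e0 = (0 : Λ) from congrArg Subtype.val he00]; exact zero_mem J)

end Key

/-- Let `Λ` be an artin algebra with `Jⁿ = 0` for some `n ≥ 2`, and let `M`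
be a finitely generated Gorenstein projective `Λ`-module without nonzero projective direct
summands.  Then `Jⁿ⁻¹M = 0` and `Jⁿ⁻²M` is semisimple. -/
theorem radical_power_of_Gorenstein_projective_without_projective_summands
    (R : Type u) [CommRing R] [IsArtinianRing R]
    (Λ : Type u) [Ring Λ] [Algebra R Λ] [Module.Finite R Λ]
    (n : ℕ) (hn : 2 ≤ n) (hJn : radPow Λ Λ n = ⊥)
    (M : Type u) [AddCommGroup M] [Module Λ M] [Module.Finite Λ M]
    (hM : IsGorensteinProjective Λ M)
    (hsummand : ∀ N N' : Submodule Λ M, IsCompl N N' → Module.Projective Λ ↥N → N = ⊥) :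
    radPow Λ M (n - 1) = ⊥ ∧ IsSemisimpleModule Λ ↥(radPow Λ M (n - 2)) := by
  haveI : IsArtinian R Λ := inferInstance
  haveI hart : IsArtinianRing Λ := isArtinian_of_tower R inferInstance
  have hss := isSemisimpleModule_quotient_jacobson (Λ := Λ)
  obtain ⟨C, ⟨eM⟩⟩ := hM
  haveI := C.proj 0
  set K : Submodule Λ (C.X 0) := LinearMap.ker (C.d 0) with hK
  have hn1 : 1 ≤ n := le_trans one_le_two hn
  have hKle : K ≤ idealSmul ((⊥ : Ideal Λ).jacobson) ⊤ :=
    ker_le_idealSmul_of_no_proj_summand hn1 hJn hss K eM hsummand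
  have hsub : ∀ k, (radPow Λ ↥K k).map K.subtype ≤ radPow Λ (C.X 0) (k + 1) := by
    intro k
    induction k with
    | zero =>
      rw [radPow_zero, Submodule.map_top, Submodule.range_subtype, radPow_succ, radPow_zero]
      exact hKle
    | succ k ih =>
      rw [radPow_succ, radPow_succ]
      exact (map_idealSmul_le _ _ _).trans (idealSmul_mono ih)
  have hKbot : radPow Λ ↥K (n - 1) = ⊥ := by
    have h2 := hsub (n - 1)
    rw [show n - 1 + 1 = n from by omega, radPow_eq_bot hJn] at h2
    rw [eq_bot_iff]
    intro w hw
    have hval : (w : C.X 0) ∈ (⊥ : Submodule Λ (C.X 0)) := h2 (Submodule.mem_map_of_mem hw)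
    rw [Submodule.mem_bot] at hval
    rw [Submodule.mem_bot]
    exact Subtype.ext hval
  have part1 : radPow Λ M (n - 1) = ⊥ := radPow_eq_bot_of_equiv eM hKbot
  refine ⟨part1, ?_⟩
  have hann : ∀ a ∈ (⊥ : Ideal Λ).jacobson, ∀ w : ↥(radPow Λ M (n - 2)), a • w = 0 := by
    intro a ha w
    have hmem : a • (w : M) ∈ radPow Λ M (n - 1) := by
      rw [show n - 1 = (n - 2) + 1 from by omega, radPow_succ]
      exact smul_mem_idealSmul ha w.2
    rw [part1, Submodule.mem_bot] at hmem
    exact Subtype.ext (by rw [Submodule.coe_smul]; exact hmem)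
  exact isSemisimpleModule_of_jacobson_smul_eq_zero hss hann
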